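/- With Λ_u(x;y) as above, B_N(u) Λ_u(x;y) = i^{N−1} Λ_{u+iħ}(x;y). -/

import Mathlib

noncomputable section

open Complex

/-- Complex-valued functions of countably many real coordinates `x 1, x 2, …`. -/
abbrev TodaFun := (ℕ → ℝ) → ℂ

/-- The momentum operator of the `n`-th particle, `p_n = −iħ ∂/∂x_n`. -/
def pOp (hbar : ℝ) (n : ℕ) (f : TodaFun) : TodaFun :=
  fun x => (-Complex.I * hbar) * deriv (fun t : ℝ => f (Function.update x n t)) (x n)

/-- The Lax matrix `L_n(u) = [[u − p_n, e^{−x_n}], [−e^{x_n}, 0]]`,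
as a 2×2 matrix of operators on functions. -/
def Lax (hbar : ℝ) (u : ℂ) (n : ℕ) : Fin 2 → Fin 2 → (TodaFun → TodaFun) :=
  ![![fun f x => u * f x - pOp hbar n f x, fun f x => (Real.exp (-(x n)) : ℂ) * f x],
    ![fun f x => (-Real.exp (x n) : ℝ) * f x, fun _ _ => 0]]

/-- Product of 2×2 matrices of operators: `(AB)_{ij} f = A_{i0}(B_{0j} f) + A_{i1}(B_{1j} f)`. -/
def mulOp (A B : Fin 2 → Fin 2 → (TodaFun → TodaFun)) : Fin 2 → Fin 2 → (TodaFun → TodaFun) :=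
  fun i j f x => A i 0 (B 0 j f) x + A i 1 (B 1 j f) x

/-- The monodromy matrix `T_N(u) = L_N(u) ⋯ L_1(u)`, with `T_0 = Id`. -/
def Tmat (hbar : ℝ) (u : ℂ) : ℕ → (Fin 2 → Fin 2 → (TodaFun → TodaFun))
  | 0 => ![![fun f => f, fun _ _ => 0], ![fun _ _ => 0, fun f => f]]
  | (n + 1) => mulOp (Lax hbar u (n + 1)) (Tmat hbar u n)

/-- `A_N(u)`: the (1,1) entry of the monodromy matrix. -/
def Aop (hbar : ℝ) (u : ℂ) (N : ℕ) : TodaFun → TodaFun := Tmat hbar u N 0 0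

/-- `B_N(u)`: the (1,2) entry of the monodromy matrix. -/
def Bop (hbar : ℝ) (u : ℂ) (N : ℕ) : TodaFun → TodaFun := Tmat hbar u N 0 1

/-- `C_N(u)`: the (2,1) entry of the monodromy matrix. -/
def Cop (hbar : ℝ) (u : ℂ) (N : ℕ) : TodaFun → TodaFun := Tmat hbar u N 1 0

/-- `D_N(u)`: the (2,2) entry of the monodromy matrix. -/
def Dop (hbar : ℝ) (u : ℂ) (N : ℕ) : TodaFun → TodaFun := Tmat hbar u N 1 1

/-- The kernel
`Λ_u(x;y) = exp{(i/ħ)u(Σ_{n=1}^N x_n − Σ_{n=1}^{N−1} y_n)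
  − (1/ħ)Σ_{n=1}^{N−1}(e^{y_n−x_{n+1}} + e^{x_n−y_n})}`. -/
def LamKer (hbar : ℝ) (N : ℕ) (u : ℂ) (y : ℕ → ℝ) : TodaFun :=
  fun x => Complex.exp (Complex.I * u / hbar
    * (((∑ n ∈ Finset.Icc 1 N, x n) - ∑ n ∈ Finset.Icc 1 (N - 1), y n : ℝ) : ℂ)
    - ((1 / hbar) * ∑ n ∈ Finset.Icc 1 (N - 1),
        (Real.exp (y n - x (n + 1)) + Real.exp (x n - y n)) : ℝ))

lemma hasDerivAt_update_sum (x : ℕ → ℝ) (n : ℕ) (s : Finset ℕ) :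
    HasDerivAt (fun t => ∑ k ∈ s, Function.update x n t k)
      (if n ∈ s then (1:ℝ) else 0) (x n) := by
  have h : ∀ k ∈ s, HasDerivAt (fun t => Function.update x n t k)
      (if k = n then (1:ℝ) else 0) (x n) := by
    intro k _
    rcases eq_or_ne k n with h | h
    · subst h
      simpa [Function.update_apply] using hasDerivAt_id' (x k)
    · simpa [Function.update_apply, h] using hasDerivAt_const (x n) (x k)
  simpa [Finset.sum_ite_eq' s n (fun _ => (1:ℝ))] using HasDerivAt.fun_sum h

lemma hasDerivAt_exp_sum (x y : ℕ → ℝ) (n N : ℕ) (hn : 1 ≤ n) (hN : 2 ≤ N) :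
    HasDerivAt (fun t => ∑ k ∈ Finset.Icc 1 (N-1),
        (Real.exp (y k - Function.update x n t (k+1)) + Real.exp (Function.update x n t k - y k)))
      ((if n ∈ Finset.Icc 2 N then -Real.exp (y (n-1) - x n) else 0)
        + (if n ∈ Finset.Icc 1 (N-1) then Real.exp (x n - y n) else 0)) (x n) := by
  have h : ∀ k ∈ Finset.Icc 1 (N-1), HasDerivAt
      (fun t => Real.exp (y k - Function.update x n t (k+1))
        + Real.exp (Function.update x n t k - y k))
      ((if k + 1 = n then -Real.exp (y k - x n) else 0)
        + (if k = n then Real.exp (x n - y k) else 0)) (x n) := by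
    intro k _
    have h1 : HasDerivAt (fun t => Real.exp (y k - Function.update x n t (k+1)))
        (if k + 1 = n then -Real.exp (y k - x n) else 0) (x n) := by
      rcases eq_or_ne (k+1) n with h | h
      · rw [if_pos h]
        have := ((hasDerivAt_id (x n)).const_sub (y k)).exp
        simpa [Function.update_apply, h] using this
      · rw [if_neg h]
        simpa [Function.update_apply, h] using
          hasDerivAt_const (x n) (Real.exp (y k - x (k+1)))
    have h2 : HasDerivAt (fun t => Real.exp (Function.update x n t k - y k))
        (if k = n then Real.exp (x n - y k) else 0) (x n) := by
      rcases eq_or_ne k n with h | h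
      · rw [if_pos h]
        have := ((hasDerivAt_id (x n)).sub_const (y k)).exp
        simpa [Function.update_apply, h] using this
      · rw [if_neg h]
        simpa [Function.update_apply, h] using
          hasDerivAt_const (x n) (Real.exp (x k - y k))
    exact h1.add h2
  have hsum := HasDerivAt.fun_sum h
  rw [Finset.sum_add_distrib] at hsum
  have e1 : (∑ k ∈ Finset.Icc 1 (N-1), if k + 1 = n then -Real.exp (y k - x n) else 0)
      = if n ∈ Finset.Icc 2 N then -Real.exp (y (n-1) - x n) else 0 := by
    have : ∀ k ∈ Finset.Icc 1 (N-1),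
        (if k + 1 = n then -Real.exp (y k - x n) else 0)
          = (if k = n - 1 then -Real.exp (y (n-1) - x n) else 0) := by
      intro k _
      rcases eq_or_ne (k+1) n with h | h
      · rw [if_pos h, if_pos (by omega), show k = n - 1 from by omega]
      · rw [if_neg h, if_neg (by omega)]
    rw [Finset.sum_congr rfl this, Finset.sum_ite_eq' _ (n-1) (fun _ => -Real.exp (y (n-1) - x n))]
    congr 1
    simp only [Finset.mem_Icc, eq_iff_iff]
    omega
  have e2 : (∑ k ∈ Finset.Icc 1 (N-1), if k = n then Real.exp (x n - y k) else 0)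
      = if n ∈ Finset.Icc 1 (N-1) then Real.exp (x n - y n) else 0 :=
    Finset.sum_ite_eq' _ n (fun k => Real.exp (x n - y k))
  rwa [e1, e2] at hsum

lemma hasDerivAt_LamKer (hbar : ℝ) (N : ℕ) (u : ℂ) (y x : ℕ → ℝ) (n : ℕ)
    (hn : 1 ≤ n) (hnN : n ≤ N) (hN : 2 ≤ N) :
    HasDerivAt (fun t => LamKer hbar N u y (Function.update x n t))
      (LamKer hbar N u y x * (Complex.I * u / hbar
        - (((1/hbar) * ((if n ∈ Finset.Icc 2 N then -Real.exp (y (n-1) - x n) else 0)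
             + (if n ∈ Finset.Icc 1 (N-1) then Real.exp (x n - y n) else 0)) : ℝ) : ℂ)))
      (x n) := by
  have hA : HasDerivAt (fun t => (∑ k ∈ Finset.Icc 1 N, Function.update x n t k)
      - ∑ k ∈ Finset.Icc 1 (N-1), y k) (1:ℝ) (x n) := by
    have := (hasDerivAt_update_sum x n (Finset.Icc 1 N)).sub_const
      (∑ k ∈ Finset.Icc 1 (N-1), y k)
    simpa [Finset.mem_Icc, hn, hnN] using this
  have hB := ((hasDerivAt_exp_sum x y n N hn hN).const_mul ((1:ℝ)/hbar))
  have hF := (((hA.ofReal_comp).const_mul (Complex.I * u / hbar)).fun_sub hB.ofReal_comp)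
  have hE := hF.cexp
  have hx : Function.update x n (x n) = x := Function.update_eq_self n x
  rw [hx] at hE
  convert hE using 1
  all_goals
  unfold LamKer
  push_cast
  ring

lemma pOp_prefac (hbar : ℝ) (n : ℕ) (g f : TodaFun) (x : ℕ → ℝ)
    (hg : ∀ t, g (Function.update x n t) = g x) :
    pOp hbar n (fun z => g z * f z) x = g x * pOp hbar n f x := by
  unfold pOp
  have h : (fun t => g (Function.update x n t) * f (Function.update x n t))
      = fun t => g x * f (Function.update x n t) := funext fun t => by rw [hg]
  rw [h, deriv_const_mul_field]
  ring

lemma uSubP (hbar : ℝ) (hh : 0 < hbar) (N : ℕ) (u : ℂ) (y : ℕ → ℝ) (n : ℕ)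
    (hn : 1 ≤ n) (hnN : n ≤ N) (hN : 2 ≤ N) (x : ℕ → ℝ) :
    u * LamKer hbar N u y x - pOp hbar n (LamKer hbar N u y) x
      = Complex.I * (((if n ∈ Finset.Icc 2 N then Real.exp (y (n-1) - x n) else 0)
          - (if n ∈ Finset.Icc 1 (N-1) then Real.exp (x n - y n) else 0) : ℝ))
        * LamKer hbar N u y x := by
  unfold pOp
  rw [(hasDerivAt_LamKer hbar N u y x n hn hnN hN).deriv]
  have hbne : (hbar : ℂ) ≠ 0 := by
    exact_mod_cast ne_of_gt hh
  have hneg : (if n ∈ Finset.Icc 2 N then -Real.exp (y (n-1) - x n) else 0)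
      = -(if n ∈ Finset.Icc 2 N then Real.exp (y (n-1) - x n) else 0) := by
    split_ifs <;> simp
  rw [hneg]
  push_cast
  field_simp
  ring_nf
  simp [Complex.I_sq]

def Pe (y x : ℕ → ℝ) (m : ℕ) : ℝ := Real.exp (∑ k ∈ Finset.Icc 2 m, (y (k-1) - x k))

def Ssum (y x : ℕ → ℝ) : ℕ → ℝ
  | 0 => 0
  | n+1 => Pe y x (n+1) - Real.exp (x (n+1) - y (n+1)) * Ssum y x n

lemma Pe_one (y x : ℕ → ℝ) : Pe y x 1 = 1 := by
  unfold Pe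
  rw [show Finset.Icc 2 1 = ∅ from by decide]
  simp

lemma Ssum_one (y x : ℕ → ℝ) : Ssum y x 1 = 1 := by
  show Pe y x 1 - Real.exp (x 1 - y 1) * Ssum y x 0 = 1
  rw [Pe_one]
  show (1:ℝ) - Real.exp (x 1 - y 1) * 0 = 1
  ring

lemma Pe_succ (y x : ℕ → ℝ) (n : ℕ) (hn : 1 ≤ n) :
    Pe y x (n+1) = Pe y x n * Real.exp (y n - x (n+1)) := by
  unfold Pe
  rw [Finset.sum_Icc_succ_top (by omega : 2 ≤ n + 1), Real.exp_add]
  simp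

lemma Ssum_K (y x : ℕ → ℝ) (m : ℕ) :
    Ssum y x (m+1) * Real.exp (y (m+1) - x (m+2)) + Real.exp (x (m+1) - x (m+2)) * Ssum y x m
      = Pe y x (m+2) := by
  show (Pe y x (m+1) - Real.exp (x (m+1) - y (m+1)) * Ssum y x m) * Real.exp (y (m+1) - x (m+2))
      + Real.exp (x (m+1) - x (m+2)) * Ssum y x m = Pe y x (m+2)
  rw [Pe_succ y x (m+1) (by omega)]
  show (Pe y x (m+1) - Real.exp (x (m+1) - y (m+1)) * Ssum y x m) * Real.exp (y (m+1) - x (m+2))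
      + Real.exp (x (m+1) - x (m+2)) * Ssum y x m = Pe y x (m+1) * Real.exp (y (m+1) - x (m+2))
  have key : Real.exp (x (m+1) - y (m+1)) * Real.exp (y (m+1) - x (m+2))
      = Real.exp (x (m+1) - x (m+2)) := by rw [← Real.exp_add]; ring_nf
  linear_combination (-(Ssum y x m)) * key

lemma Ssum_step (y x : ℕ → ℝ) (m : ℕ) :
    Ssum y x (m+2) = Ssum y x (m+1) * (Real.exp (y (m+1) - x (m+2)) - Real.exp (x (m+2) - y (m+2)))
      + Real.exp (x (m+1) - x (m+2)) * Ssum y x m := by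
  show Pe y x (m+2) - Real.exp (x (m+2) - y (m+2)) * Ssum y x (m+1) = _
  rw [← Ssum_K y x m]
  ring

lemma Pe_update (y x : ℕ → ℝ) (m j : ℕ) (t : ℝ) (hj : m < j) :
    Pe y (Function.update x j t) m = Pe y x m := by
  unfold Pe
  congr 1
  refine Finset.sum_congr rfl fun k hk => ?_
  rw [Function.update_apply, if_neg (by simp only [Finset.mem_Icc] at hk; omega)]

lemma Ssum_update (y x : ℕ → ℝ) (t : ℝ) : ∀ (n j : ℕ), n < j →
    Ssum y (Function.update x j t) n = Ssum y x n
  | 0, j, _ => rfl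
  | (n+1), j, hj => by
    show Pe y (Function.update x j t) (n+1) - Real.exp (Function.update x j t (n+1) - y (n+1))
        * Ssum y (Function.update x j t) n = _
    rw [Pe_update y x (n+1) j t hj, Ssum_update y x t n j (by omega),
      Function.update_apply, if_neg (by omega)]
    rfl

lemma Bop_zero (hbar : ℝ) (u : ℂ) (f : TodaFun) (x : ℕ → ℝ) : Bop hbar u 0 f x = 0 := rfl

lemma Dop_zero (hbar : ℝ) (u : ℂ) (f : TodaFun) (x : ℕ → ℝ) : Dop hbar u 0 f x = f x := rfl

lemma Bop_succ (hbar : ℝ) (u : ℂ) (n : ℕ) (f : TodaFun) (x : ℕ → ℝ) :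
    Bop hbar u (n+1) f x
      = (u * Bop hbar u n f x - pOp hbar (n+1) (Bop hbar u n f) x)
        + (Real.exp (-(x (n+1))) : ℝ) * Dop hbar u n f x := by
  simp [Bop, Dop, Tmat, mulOp, Lax]

lemma Dop_succ (hbar : ℝ) (u : ℂ) (n : ℕ) (f : TodaFun) (x : ℕ → ℝ) :
    Dop hbar u (n+1) f x = (-Real.exp (x (n+1)) : ℝ) * Bop hbar u n f x := by
  simp [Bop, Dop, Tmat, mulOp, Lax]

lemma claim (hbar : ℝ) (hh : 0 < hbar) (u : ℂ) (N : ℕ) (hN : 2 ≤ N) (y : ℕ → ℝ) :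
    ∀ n, n ≤ N - 1 → ∀ x, Bop hbar u n (LamKer hbar N u y) x
      = Complex.I ^ (n-1) * (Real.exp (-(x 1)) : ℝ) * ((Ssum y x n : ℝ) : ℂ)
        * LamKer hbar N u y x := by
  intro n
  induction n using Nat.twoStepInduction with
  | zero =>
    intro _ x
    rw [Bop_zero]
    show (0:ℂ) = _ * ((((0:ℝ)):ℝ):ℂ) * _
    simp
  | one =>
    intro _ x
    rw [Bop_succ]
    have h0 : Bop hbar u 0 (LamKer hbar N u y) = fun _ => (0:ℂ) := rfl
    rw [h0]
    have hp : pOp hbar 1 (fun _ : ℕ → ℝ => (0:ℂ)) x = 0 := by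
      simp [pOp]
    rw [hp, Dop_zero, Ssum_one]
    simp
  | more m ih0 ih1 =>
    intro h x
    have hB1 : ∀ z, Bop hbar u (m+1) (LamKer hbar N u y) z
        = Complex.I ^ m * (Real.exp (-(z 1)) : ℝ) * ((Ssum y z (m+1) : ℝ) : ℂ)
          * LamKer hbar N u y z := by
      intro z
      simpa using ih1 (by omega) z
    have hBm : Bop hbar u m (LamKer hbar N u y) x
        = Complex.I ^ (m-1) * (Real.exp (-(x 1)) : ℝ) * ((Ssum y x m : ℝ) : ℂ)
          * LamKer hbar N u y x := ih0 (by omega) x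
    set g : TodaFun := fun z => Complex.I ^ m * ((Real.exp (-(z 1)) : ℝ) : ℂ)
      * ((Ssum y z (m+1) : ℝ) : ℂ) with hg
    have hfun : Bop hbar u (m+1) (LamKer hbar N u y)
        = fun z => g z * LamKer hbar N u y z := funext fun z => hB1 z
    have hpre : ∀ t, g (Function.update x (m+2) t) = g x := by
      intro t
      rw [hg]
      simp only []
      rw [Ssum_update y x t (m+1) (m+2) (by omega), Function.update_apply, if_neg (by omega)]
    have hBs : Bop hbar u (m+2) (LamKer hbar N u y) x
        = (u * Bop hbar u (m+1) (LamKer hbar N u y) x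
            - pOp hbar (m+2) (Bop hbar u (m+1) (LamKer hbar N u y)) x)
          + ((Real.exp (-(x (m+2))) : ℝ) : ℂ) * Dop hbar u (m+1) (LamKer hbar N u y) x :=
      Bop_succ hbar u (m+1) _ x
    have hDs : Dop hbar u (m+1) (LamKer hbar N u y) x
        = ((-Real.exp (x (m+1)) : ℝ) : ℂ) * Bop hbar u m (LamKer hbar N u y) x :=
      Dop_succ hbar u m _ x
    rw [hBs, hDs, hfun, pOp_prefac hbar (m+2) g (LamKer hbar N u y) x hpre, hBm]
    have hu := uSubP hbar hh N u y (m+2) (by omega) (by omega) hN x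
    rw [if_pos (by simp only [Finset.mem_Icc]; omega),
      if_pos (by simp only [Finset.mem_Icc]; omega)] at hu
    rw [show (m+2) - 1 = m + 1 from rfl] at hu
    have hpow : (-(Complex.I ^ (m-1))) * ((Ssum y x m : ℝ) : ℂ)
        = Complex.I ^ (m+1) * ((Ssum y x m : ℝ) : ℂ) := by
      cases m with
      | zero =>
        show (-(Complex.I ^ 0)) * (((Ssum y x 0 : ℝ)) : ℂ) = _ * (((Ssum y x 0 : ℝ)) : ℂ)
        rw [show Ssum y x 0 = (0:ℝ) from rfl]
        simp
      | succ k =>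
        have hI2 : Complex.I ^ (k+2) = -(Complex.I ^ k) := by
          rw [pow_succ, pow_succ, mul_assoc, Complex.I_mul_I]
          ring
        rw [show (k+1) - 1 = k from rfl, hI2]
    have hexp : Real.exp (-(x (m+2))) * Real.exp (x (m+1))
        = Real.exp (x (m+1) - x (m+2)) := by
      rw [← Real.exp_add]; ring_nf
    have hexpC := congrArg (fun r : ℝ => (r : ℂ)) hexp
    have hstepC := congrArg (fun r : ℝ => (r : ℂ)) (Ssum_step y x m)
    rw [show (m+2) - 1 = m + 1 from rfl]
    simp only [hg]
    push_cast at hexpC hstepC hpow hu ⊢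
    linear_combination
      (Complex.I ^ m * Complex.exp (-((x 1 : ℝ) : ℂ)) * ((Ssum y x (m+1) : ℝ) : ℂ)) * hu
      + (-(Complex.I ^ (m+1)) * Complex.exp (-((x 1 : ℝ) : ℂ)) * LamKer hbar N u y x) * hstepC
      + (Complex.I ^ (m+1) * Complex.exp (-((x 1 : ℝ) : ℂ)) * ((Ssum y x m : ℝ) : ℂ)
          * LamKer hbar N u y x) * hexpC
      + (Complex.exp (-((x (m+2) : ℝ) : ℂ)) * Complex.exp ((x (m+1) : ℝ) : ℂ)
          * Complex.exp (-((x 1 : ℝ) : ℂ)) * LamKer hbar N u y x) * hpow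

lemma sum_shift_y (y : ℕ → ℝ) (N : ℕ) (hN : 2 ≤ N) :
    ∑ k ∈ Finset.Icc 2 N, y (k-1) = ∑ k ∈ Finset.Icc 1 (N-1), y k := by
  rw [show Finset.Icc 2 N
      = Finset.map ⟨fun k => k+1, fun a b h => Nat.add_right_cancel h⟩ (Finset.Icc 1 (N-1)) from by
    ext a
    simp only [Finset.mem_map, Finset.mem_Icc, Function.Embedding.coeFn_mk]
    constructor
    · intro ha
      exact ⟨a-1, by omega, by show a - 1 + 1 = a; omega⟩
    · rintro ⟨b, hb, rfl⟩
      show 2 ≤ b + 1 ∧ b + 1 ≤ N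
      omega]
  rw [Finset.sum_map]
  rfl

lemma sum_split_x (x : ℕ → ℝ) (N : ℕ) (hN : 2 ≤ N) :
    ∑ k ∈ Finset.Icc 1 N, x k = x 1 + ∑ k ∈ Finset.Icc 2 N, x k := by
  rw [show Finset.Icc 1 N = insert 1 (Finset.Icc 2 N) from by
    ext a
    simp only [Finset.mem_insert, Finset.mem_Icc]
    omega]
  rw [Finset.sum_insert (by simp)]

lemma LamKer_shift (hbar : ℝ) (hh : 0 < hbar) (N : ℕ) (u : ℂ) (y : ℕ → ℝ) (hN : 2 ≤ N)
    (x : ℕ → ℝ) :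
    LamKer hbar N (u + Complex.I * hbar) y x
      = ((Real.exp (-(x 1)) : ℝ) : ℂ) * ((Pe y x N : ℝ) : ℂ) * LamKer hbar N u y x := by
  unfold LamKer Pe
  rw [Complex.ofReal_exp, Complex.ofReal_exp, ← Complex.exp_add, ← Complex.exp_add]
  congr 1
  have hbne : (hbar : ℂ) ≠ 0 := by exact_mod_cast ne_of_gt hh
  have hreal : (-(x 1)) + (∑ k ∈ Finset.Icc 2 N, (y (k-1) - x k))
      = -((∑ k ∈ Finset.Icc 1 N, x k) - ∑ k ∈ Finset.Icc 1 (N-1), y k) := by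
    rw [Finset.sum_sub_distrib, sum_shift_y y N hN, sum_split_x x N hN]
    ring
  have hrealC := congrArg (fun r : ℝ => (r : ℂ)) hreal
  push_cast at hrealC ⊢
  have hdiv : Complex.I * (u + Complex.I * ↑hbar) / ↑hbar = Complex.I * u / ↑hbar - 1 := by
    field_simp
    linear_combination (hbar : ℂ) * Complex.I_mul_I
  linear_combination ((∑ i ∈ Finset.Icc 1 N, ((x i : ℝ) : ℂ))
      - ∑ i ∈ Finset.Icc 1 (N-1), ((y i : ℝ) : ℂ)) * hdiv - hrealC

theorem Bop_shifts_LamKer (hbar : ℝ) (hh : 0 < hbar) (u : ℂ) (N : ℕ) (hN : 2 ≤ N)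
    (y : ℕ → ℝ) :
    ∀ x : ℕ → ℝ,
      Bop hbar u N (LamKer hbar N u y) x
        = Complex.I ^ (N - 1) * LamKer hbar N (u + Complex.I * hbar) y x := by
  obtain ⟨M, rfl⟩ : ∃ M, N = M + 2 := ⟨N - 2, by omega⟩
  intro x
  have hB1 : ∀ z, Bop hbar u (M+1) (LamKer hbar (M+2) u y) z
      = Complex.I ^ M * (Real.exp (-(z 1)) : ℝ) * ((Ssum y z (M+1) : ℝ) : ℂ)
        * LamKer hbar (M+2) u y z := by
    intro z
    simpa using claim hbar hh u (M+2) (by omega) y (M+1) (by omega) z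
  have hBm : Bop hbar u M (LamKer hbar (M+2) u y) x
      = Complex.I ^ (M-1) * (Real.exp (-(x 1)) : ℝ) * ((Ssum y x M : ℝ) : ℂ)
        * LamKer hbar (M+2) u y x := claim hbar hh u (M+2) (by omega) y M (by omega) x
  set g : TodaFun := fun z => Complex.I ^ M * ((Real.exp (-(z 1)) : ℝ) : ℂ)
    * ((Ssum y z (M+1) : ℝ) : ℂ) with hg
  have hfun : Bop hbar u (M+1) (LamKer hbar (M+2) u y)
      = fun z => g z * LamKer hbar (M+2) u y z := funext fun z => hB1 z
  have hpre : ∀ t, g (Function.update x (M+2) t) = g x := by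
    intro t
    rw [hg]
    simp only []
    rw [Ssum_update y x t (M+1) (M+2) (by omega), Function.update_apply, if_neg (by omega)]
  have hBs : Bop hbar u (M+2) (LamKer hbar (M+2) u y) x
      = (u * Bop hbar u (M+1) (LamKer hbar (M+2) u y) x
          - pOp hbar (M+2) (Bop hbar u (M+1) (LamKer hbar (M+2) u y)) x)
        + ((Real.exp (-(x (M+2))) : ℝ) : ℂ) * Dop hbar u (M+1) (LamKer hbar (M+2) u y) x :=
    Bop_succ hbar u (M+1) _ x
  have hDs : Dop hbar u (M+1) (LamKer hbar (M+2) u y) x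
      = ((-Real.exp (x (M+1)) : ℝ) : ℂ) * Bop hbar u M (LamKer hbar (M+2) u y) x :=
    Dop_succ hbar u M _ x
  rw [hBs, hDs, hfun, pOp_prefac hbar (M+2) g (LamKer hbar (M+2) u y) x hpre, hBm]
  have hu := uSubP hbar hh (M+2) u y (M+2) (by omega) (by omega) (by omega) x
  rw [if_pos (by simp only [Finset.mem_Icc]; omega),
    if_neg (by simp only [Finset.mem_Icc]; omega)] at hu
  rw [show (M+2) - 1 = M + 1 from rfl] at hu
  have hpow : (-(Complex.I ^ (M-1))) * ((Ssum y x M : ℝ) : ℂ)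
      = Complex.I ^ (M+1) * ((Ssum y x M : ℝ) : ℂ) := by
    cases M with
    | zero =>
      show (-(Complex.I ^ 0)) * (((Ssum y x 0 : ℝ)) : ℂ) = _ * (((Ssum y x 0 : ℝ)) : ℂ)
      rw [show Ssum y x 0 = (0:ℝ) from rfl]
      simp
    | succ k =>
      have hI2 : Complex.I ^ (k+2) = -(Complex.I ^ k) := by
        rw [pow_succ, pow_succ, mul_assoc, Complex.I_mul_I]
        ring
      rw [show (k+1) - 1 = k from rfl, hI2]
  have hexp : Real.exp (-(x (M+2))) * Real.exp (x (M+1))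
      = Real.exp (x (M+1) - x (M+2)) := by
    rw [← Real.exp_add]; ring_nf
  have hexpC := congrArg (fun r : ℝ => (r : ℂ)) hexp
  have hKC := congrArg (fun r : ℝ => (r : ℂ)) (Ssum_K y x M)
  rw [LamKer_shift hbar hh (M+2) u y (by omega) x]
  rw [show (M+2) - 1 = M + 1 from rfl]
  simp only [hg]
  push_cast at hexpC hKC hpow hu ⊢
  linear_combination
    (Complex.I ^ M * Complex.exp (-((x 1 : ℝ) : ℂ)) * ((Ssum y x (M+1) : ℝ) : ℂ)) * hu
    + (Complex.I ^ (M+1) * Complex.exp (-((x 1 : ℝ) : ℂ)) * LamKer hbar (M+2) u y x) * hKC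
    + (Complex.I ^ (M+1) * Complex.exp (-((x 1 : ℝ) : ℂ)) * ((Ssum y x M : ℝ) : ℂ)
        * LamKer hbar (M+2) u y x) * hexpC
    + (Complex.exp (-((x (M+2) : ℝ) : ℂ)) * Complex.exp ((x (M+1) : ℝ) : ℂ)
        * Complex.exp (-((x 1 : ℝ) : ℂ)) * LamKer hbar (M+2) u y x) * hpow

end
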